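/- (Lemma 3.7, prime_nilpotent.) Let m ≥ 1, let p_1, …, p_m be distinct primes and r_1, …, r_m positive integers, and set H = ⊕_{s=1}^m ℤ/p_s^{r_s}ℤ. Let G be an abelian group such that for no s is ℤ/p_s^{r_s}ℤ a direct summand of G. Then every additive endomorphism of H that factors through G is nilpotent; that is, for all additive homomorphisms u : H → G and v : G → H, the composite v ∘ u is a nilpotent endomorphism of H. -/

import Mathlib

/-- View an additive endomorphism as an element of the endomorphism monoid, so that
powers make sense. -/
def toEnd {A : Type*} [AddCommGroup A] (e : A →+ A) : AddMonoid.End A := e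

/-- An additive endomorphism is nilpotent if `e^k = 0` for some `k ≥ 1`. -/
def IsNilpotentEnd {A : Type*} [AddCommGroup A] (e : A →+ A) : Prop :=
  ∃ k : ℕ, 1 ≤ k ∧ toEnd e ^ k = 0

lemma zmod_hom_apply {n : ℕ} [NeZero n] {A : Type*} [AddCommGroup A]
    (f : ZMod n →+ A) (x : ZMod n) : f x = x.val • f 1 := by
  conv_lhs => rw [← ZMod.natCast_rightInverse x, ← Nat.smul_one_eq_cast (x.val)]
  rw [map_nsmul]

lemma zmod_hom_coprime_eq_zero {M N : ℕ} [NeZero M] [NeZero N]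
    (h : Nat.Coprime M N) (f : ZMod M →+ ZMod N) : f = 0 := by
  have h1 : (M : ZMod N) * f 1 = 0 := by
    rw [← nsmul_eq_mul, ← map_nsmul]
    simp [Nat.smul_one_eq_cast]
  have hu : IsUnit (M : ZMod N) := (ZMod.isUnit_iff_coprime M N).2 h
  have hf1 : f 1 = 0 := by
    obtain ⟨w, hw⟩ := hu
    rw [← hw] at h1
    exact (w.mul_right_eq_zero).mp h1
  ext x
  rw [zmod_hom_apply, hf1]
  simp

lemma summand_of_splitting {A : Type*} {G : Type u} [AddCommGroup A] [AddCommGroup G]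
    (u' : A →+ G) (v' : G →+ A) (h : ∀ a, v' (u' a) = a) :
    ∃ (K : Type u) (_ : AddCommGroup K), Nonempty (G ≃+ A × K) := by
  refine ⟨↥v'.ker, inferInstance, ⟨?_⟩⟩
  refine
    { toFun := fun g => (v' g, ⟨g - u' (v' g), by simp [AddMonoidHom.mem_ker, h]⟩)
      invFun := fun x => u' x.1 + x.2.1
      left_inv := fun g => by simp
      right_inv := fun x => by
        have hx : v' x.2.1 = 0 := x.2.2
        ext <;> simp [hx, h]
      map_add' := fun g g' => by
        ext <;> simp <;> abel }


/-- Lemma 3.7 (`prime_nilpotent`): let `H = ⊕_{s} ℤ/p_s^{r_s}ℤ` for distinct primes `p_s` and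
`r_s ≥ 1`.  If `G` is an abelian group having no `ℤ/p_s^{r_s}ℤ` as a direct summand, then every
additive endomorphism of `H` that factors through `G` is nilpotent. -/
theorem prime_nilpotent.{u} {m : ℕ} (hm : 1 ≤ m)
    (p : Fin m → ℕ) (hp : ∀ s, (p s).Prime) (hinj : Function.Injective p)
    (r : Fin m → ℕ) (hr : ∀ s, 1 ≤ r s)
    {G : Type u} [AddCommGroup G]
    (hG : ∀ s : Fin m,
      ¬ ∃ (K : Type u) (_ : AddCommGroup K), Nonempty (G ≃+ ZMod (p s ^ r s) × K))
    (u : (∀ s, ZMod (p s ^ r s)) →+ G) (v : G →+ ∀ s, ZMod (p s ^ r s)) :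
    IsNilpotentEnd (v.comp u) := by
  classical
  haveI hNZ : ∀ s : Fin m, NeZero (p s ^ r s) :=
    fun s => ⟨pow_ne_zero _ (hp s).ne_zero⟩
  set e : (∀ s, ZMod (p s ^ r s)) →+ (∀ s, ZMod (p s ^ r s)) := v.comp u with he
  set a : ∀ s, ZMod (p s ^ r s) := fun s => e (Pi.single s 1) s with ha
  -- the key diagonal computation
  have key : ∀ (x : ∀ s, ZMod (p s ^ r s)) (s : Fin m), e x s = x s * a s := by
    intro x s
    conv_lhs => rw [← Finset.univ_sum_single x]
    rw [map_sum, Finset.sum_apply]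
    rw [Finset.sum_eq_single s]
    · have h1 := zmod_hom_apply
        ((Pi.evalAddMonoidHom (fun t => ZMod (p t ^ r t)) s).comp
          (e.comp (AddMonoidHom.single (fun t => ZMod (p t ^ r t)) s))) (x s)
      simp only [AddMonoidHom.comp_apply, Pi.evalAddMonoidHom_apply,
        AddMonoidHom.single_apply] at h1
      rw [h1, nsmul_eq_mul, ZMod.natCast_rightInverse (x s)]
    · intro t _ hts
      have hcop : Nat.Coprime (p t ^ r t) (p s ^ r s) :=
        ((Nat.coprime_primes (hp t) (hp s)).2 fun h => hts (hinj h)).pow _ _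
      have h0 := zmod_hom_coprime_eq_zero hcop
        ((Pi.evalAddMonoidHom (fun t' => ZMod (p t' ^ r t')) s).comp
          (e.comp (AddMonoidHom.single (fun t' => ZMod (p t' ^ r t')) t)))
      have := DFunLike.congr_fun h0 (x t)
      simpa using this
    · simp
  by_cases hU : ∃ s, IsUnit (a s)
  · -- contradiction with hG
    exfalso
    obtain ⟨s, w, hw⟩ := hU
    apply hG s
    refine summand_of_splitting
      (u.comp (AddMonoidHom.single (fun t => ZMod (p t ^ r t)) s))
      ((AddMonoidHom.mulLeft ((w⁻¹ : (ZMod (p s ^ r s))ˣ) : ZMod (p s ^ r s))).comp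
        ((Pi.evalAddMonoidHom (fun t => ZMod (p t ^ r t)) s).comp v)) ?_
    intro x
    have hx : e (Pi.single s x) s = x * a s := by
      have := key (Pi.single s x) s
      simpa using this
    simp only [AddMonoidHom.comp_apply, Pi.evalAddMonoidHom_apply,
      AddMonoidHom.single_apply, AddMonoidHom.coe_mulLeft]
    have : v (u (Pi.single s x)) s = x * a s := hx
    rw [this, ← hw]
    calc ((w⁻¹ : (ZMod (p s ^ r s))ˣ) : ZMod (p s ^ r s)) * (x * w) =
        x * (((w⁻¹ : (ZMod (p s ^ r s))ˣ) : ZMod (p s ^ r s)) * w) := by ring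
      _ = x := by rw [Units.inv_mul, mul_one]
  · push_neg at hU
    -- each a s is nilpotent: a s ^ r s = 0
    have hnil : ∀ s, a s ^ r s = 0 := by
      intro s
      have hval : ((a s).val : ZMod (p s ^ r s)) = a s := ZMod.natCast_rightInverse _
      have hnc : ¬ Nat.Coprime (a s).val (p s ^ r s) := by
        intro hc
        exact hU s (hval ▸ (ZMod.isUnit_iff_coprime _ _).2 hc)
      have hdvd : p s ∣ (a s).val := by
        by_contra hd
        exact hnc (Nat.Coprime.pow_right _
          (Nat.coprime_comm.1 ((hp s).coprime_iff_not_dvd.2 hd)))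
      obtain ⟨c, hc⟩ := hdvd
      have : a s = (p s : ZMod (p s ^ r s)) * (c : ZMod (p s ^ r s)) := by
        rw [← Nat.cast_mul, ← hc, hval]
      rw [this, mul_pow, ← Nat.cast_pow, ZMod.natCast_self, zero_mul]
    -- power formula
    have pow_key : ∀ (k : ℕ) (x : ∀ s, ZMod (p s ^ r s)) (s : Fin m),
        ((toEnd e ^ k : AddMonoid.End _) : _ →+ _) x s = x s * a s ^ k := by
      intro k
      induction k with
      | zero => intro x s; rw [pow_zero, pow_zero, mul_one]; rfl
      | succ n ih =>
        intro x s
        rw [pow_succ']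
        have : ((toEnd e * toEnd e ^ n : AddMonoid.End _) : _ →+ _) x =
            e (((toEnd e ^ n : AddMonoid.End _) : _ →+ _) x) := rfl
        rw [this, key, ih, pow_succ]
        ring
    refine ⟨Finset.univ.sup r, le_trans (hr ⟨0, hm⟩)
      (Finset.le_sup (Finset.mem_univ _)), ?_⟩
    refine AddMonoidHom.ext fun x => funext fun s => ?_
    have hks : r s ≤ Finset.univ.sup r := Finset.le_sup (Finset.mem_univ _)
    have : a s ^ Finset.univ.sup r = 0 := by
      obtain ⟨d, hd⟩ := Nat.exists_eq_add_of_le hks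
      rw [hd, pow_add, hnil, zero_mul]
    have hx := pow_key (Finset.univ.sup r) x s
    rw [this, mul_zero] at hx
    exact hx
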